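/- Under Assumptions 2 and 3, for any c ≥ 0 let μ* ∈ argmin_μ L^Fld_{c,t+1}(μ) with μ* ∈ Ω. Let S = span{a_1,…,a_n} ⊆ ℝ^m, let P_S denote the orthogonal projection onto S, and let β̲ be the smallest positive eigenvalue of E_ã[ã ã^T]. Then for every μ ∈ Ω: L^Fld_{c,t+1}(μ) − L^Fld_{c,t+1}(μ*) ≥ (α̲ β̲ / 2)·‖P_S(μ − μ*)‖_2². -/

import Mathlib

open MeasureTheory Set Finset
open scoped RealInnerProductSpace

lemma aux_mem_orth {m : ℕ} {ι : Type*} (a : ι → EuclideanSpace ℝ (Fin m))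
    (z : EuclideanSpace ℝ (Fin m)) (h : ∀ j, ⟪a j, z⟫ = 0) :
    z ∈ (Submodule.span ℝ (Set.range a))ᗮ := by
  rw [Submodule.mem_orthogonal]
  intro x hx
  induction hx using Submodule.span_induction with
  | mem x hx => obtain ⟨j, rfl⟩ := hx; exact h j
  | zero => simp
  | add x y _ _ hx hy => simp [inner_add_left, hx, hy]
  | smul t x _ hx => simp [inner_smul_left, hx]

lemma aux_quad {m n : ℕ} (a : Fin n → EuclideanSpace ℝ (Fin m)) (p : Fin n → ℝ)
    (hp : ∀ j, 0 < p j) (M : Matrix (Fin m) (Fin m) ℝ)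
    (hM : ∀ i i', M i i' = ∑ j, p j * a j i * a j i') (βl : ℝ)
    (hβl : ∀ e : ℝ, 0 < e → (∃ v : Fin m → ℝ, v ≠ 0 ∧ M.mulVec v = e • v) → βl ≤ e)
    (S : Submodule ℝ (EuclideanSpace ℝ (Fin m))) (hS : S = Submodule.span ℝ (Set.range a))
    (v : EuclideanSpace ℝ (Fin m)) :
    βl * ‖(S.orthogonalProjectionOnto v : EuclideanSpace ℝ (Fin m))‖ ^ 2 ≤
      ∑ j, p j * ⟪a j, v⟫ ^ 2 := by
  classical
  let T : EuclideanSpace ℝ (Fin m) →ₗ[ℝ] EuclideanSpace ℝ (Fin m) :=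
    { toFun := fun x => ∑ j, (p j * ⟪a j, x⟫) • a j
      map_add' := by
        intro x y
        simp [inner_add_right, mul_add, add_smul, Finset.sum_add_distrib]
      map_smul' := by
        intro t x
        simp only [real_inner_smul_right, Finset.smul_sum, smul_smul, RingHom.id_apply]
        refine Finset.sum_congr rfl fun j _ => ?_
        congr 1; ring }
  have hTapp : ∀ x, T x = ∑ j, (p j * ⟪a j, x⟫) • a j := fun _ => rfl
  have hinner : ∀ x y, ⟪T x, y⟫ = ∑ j, p j * ⟪a j, x⟫ * ⟪a j, y⟫ := by
    intro x y
    rw [hTapp, sum_inner]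
    simp only [real_inner_smul_left, mul_assoc]
  have hsymm : T.IsSymmetric := by
    intro x y
    rw [hinner, real_inner_comm, hinner]
    exact Finset.sum_congr rfl fun j _ => by ring
  have hTM : ∀ x : EuclideanSpace ℝ (Fin m), M.mulVec x = fun i => T x i := by
    intro x
    funext i
    have h1 : T x i = ∑ j, (p j * ⟪a j, x⟫) * a j i := by
      rw [hTapp]
      rw [WithLp.ofLp_sum, Finset.sum_apply]
      rfl
    rw [h1]
    show ∑ i', M i i' * x i' = _
    simp only [hM, Finset.sum_mul]
    rw [Finset.sum_comm]
    refine Finset.sum_congr rfl fun j _ => ?_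
    simp only [PiLp.inner_apply, RCLike.inner_apply, conj_trivial]
    rw [Finset.mul_sum, Finset.sum_mul]
    exact Finset.sum_congr rfl fun i' _ => by ring
  have hrank : Module.finrank ℝ (EuclideanSpace ℝ (Fin m)) = m := finrank_euclideanSpace_fin
  let b := hsymm.eigenvectorBasis hrank
  let lam := hsymm.eigenvalues hrank
  have hb : ∀ k, T (b k) = lam k • b k := fun k => hsymm.apply_eigenvectorBasis hrank k
  have hbnorm : ∀ k, ‖b k‖ = 1 := fun k => b.orthonormal.1 k
  have hlam_nonneg : ∀ k, 0 ≤ lam k := by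
    intro k
    have h1 : ⟪T (b k), b k⟫ = lam k := by
      rw [hb k, real_inner_smul_left, real_inner_self_eq_norm_sq, hbnorm k]
      simp
    have h2 : 0 ≤ ⟪T (b k), b k⟫ := by
      rw [hinner]
      refine Finset.sum_nonneg fun j _ => ?_
      rw [mul_assoc]
      exact mul_nonneg (hp j).le (mul_self_nonneg _)
    linarith
  have hker : ∀ k, lam k = 0 → (b k : EuclideanSpace ℝ (Fin m)) ∈ Sᗮ := by
    intro k hk
    have h1 : ⟪T (b k), b k⟫ = 0 := by
      rw [hb k, hk]; simp
    rw [hinner] at h1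
    have h2 : ∀ j, ⟪a j, b k⟫ = 0 := by
      intro j
      have h3 := (Finset.sum_eq_zero_iff_of_nonneg (fun j _ => by
        rw [mul_assoc]; exact mul_nonneg (hp j).le (mul_self_nonneg _))).1 h1 j (Finset.mem_univ j)
      rw [mul_assoc] at h3
      rcases mul_eq_zero.1 h3 with h | h
      · exact absurd h (hp j).ne'
      · exact mul_self_eq_zero.1 h
    rw [hS]
    exact aux_mem_orth a (b k) h2
  have hlam_ge : ∀ k, lam k ≠ 0 → βl ≤ lam k := by
    intro k hk
    refine hβl (lam k) (lt_of_le_of_ne (hlam_nonneg k) (Ne.symm hk)) ⟨b k, ?_, ?_⟩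
    · intro h0
      have hbz : (b k : EuclideanSpace ℝ (Fin m)) = 0 := by ext i; simpa using congrFun h0 i
      simpa [hbz] using hbnorm k
    · rw [hTM (b k), hb k]; ext i; simp
  -- now the projection
  set w : EuclideanSpace ℝ (Fin m) := (S.orthogonalProjectionOnto v : EuclideanSpace ℝ (Fin m)) with hw
  have hwS : w ∈ S := SetLike.coe_mem _
  have hz : v - w ∈ Sᗮ := Submodule.sub_starProjection_mem_orthogonal v
  have haS : ∀ j, a j ∈ S := fun j => hS ▸ Submodule.subset_span (Set.mem_range_self j)
  have hav : ∀ j, ⟪a j, v⟫ = ⟪a j, w⟫ := by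
    intro j
    have h0 : ⟪a j, v - w⟫ = 0 := (Submodule.mem_orthogonal S (v - w)).1 hz (a j) (haS j)
    rw [inner_sub_right] at h0
    linarith
  have hQ : ∑ j, p j * ⟪a j, v⟫ ^ 2 = ⟪T w, w⟫ := by
    rw [hinner]
    exact Finset.sum_congr rfl fun j _ => by rw [hav j]; ring
  have hbw0 : ∀ k, lam k = 0 → ⟪b k, w⟫ = 0 := by
    intro k hk
    have := (Submodule.mem_orthogonal S (b k)).1 (hker k hk) w hwS
    rw [real_inner_comm]; exact this
  have hexp : ⟪T w, w⟫ = ∑ k, lam k * ⟪b k, w⟫ ^ 2 := by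
    rw [← b.sum_inner_mul_inner (T w) w]
    refine Finset.sum_congr rfl fun k _ => ?_
    have : ⟪T w, b k⟫ = lam k * ⟪b k, w⟫ := by
      rw [hsymm w (b k), hb k, real_inner_smul_right, real_inner_comm]
    rw [this]; ring
  have hnorm : ‖w‖ ^ 2 = ∑ k, ⟪b k, w⟫ ^ 2 := by
    rw [← real_inner_self_eq_norm_sq, ← b.sum_inner_mul_inner w w]
    exact Finset.sum_congr rfl fun k _ => by rw [real_inner_comm w (b k)]; ring
  rw [hQ, hexp, hnorm, Finset.mul_sum]
  refine Finset.sum_le_sum fun k _ => ?_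
  rcases eq_or_ne (lam k) 0 with h | h
  · rw [h, hbw0 k h]; simp
  · exact mul_le_mul_of_nonneg_right (hlam_ge k h) (sq_nonneg _)


lemma aux_int (ν : Measure ℝ) [IsProbabilityMeasure ν] {C : ℝ}
    (hC : ∀ᵐ r ∂ν, r ∈ Icc (0:ℝ) C) (t : ℝ) :
    Integrable (fun r => max (r - t) 0) ν := by
  refine Integrable.mono' (integrable_const (max (C - t) 0)) ?_ ?_
  · exact ((measurable_id.sub_const t).max measurable_const).aestronglyMeasurable
  · filter_upwards [hC] with r hr
    rw [Real.norm_eq_abs, abs_of_nonneg (le_max_right _ _)]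
    exact max_le_max (by linarith [hr.2]) le_rfl

lemma aux_sub (ν : Measure ℝ) [IsProbabilityMeasure ν]
    (hint : ∀ t : ℝ, Integrable (fun r => max (r - t) 0) ν) (t t' : ℝ) :
    ((ν (Iic t)).toReal - 1) * (t' - t) ≤
      (∫ r, max (r - t') 0 ∂ν) - ∫ r, max (r - t) 0 ∂ν := by
  have hind : Integrable (fun r => -(t' - t) * (Ioi t).indicator (fun _ => (1:ℝ)) r) ν := by
    exact ((integrable_const (1:ℝ)).indicator measurableSet_Ioi).const_mul _
  have hpt : ∀ r, -(t' - t) * (Ioi t).indicator (fun _ => (1:ℝ)) r ≤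
      max (r - t') 0 - max (r - t) 0 := by
    intro r
    rcases le_or_gt r t with h | h
    · rw [indicator_of_notMem (by simpa using h)]
      have : max (r - t) 0 = 0 := max_eq_right (by linarith)
      rw [this]
      simpa using le_max_right (r - t') 0
    · rw [indicator_of_mem (by simpa using h)]
      have h1 : max (r - t) 0 = r - t := max_eq_left (by linarith)
      have h2 : r - t' ≤ max (r - t') 0 := le_max_left _ _
      rw [h1]
      linarith
  have hmono := integral_mono hind ((hint t').sub (hint t)) hpt
  simp only [Pi.sub_apply] at hmono
  rw [MeasureTheory.integral_const_mul, integral_indicator_const (1:ℝ) measurableSet_Ioi,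
    integral_sub (hint t') (hint t)] at hmono
  have hIoi : (ν (Ioi t)).toReal = 1 - (ν (Iic t)).toReal := by
    have h1 : ν (Iic t) + ν (Ioi t) = 1 := by
      rw [← measure_union (Iic_disjoint_Ioi le_rfl) measurableSet_Ioi, Iic_union_Ioi,
        measure_univ]
    have h2 : (ν (Iic t)).toReal + (ν (Ioi t)).toReal = 1 := by
      rw [← ENNReal.toReal_add (measure_ne_top ν _) (measure_ne_top ν _), h1]
      simp
    linarith
  rw [measureReal_def, hIoi, smul_eq_mul] at hmono
  nlinarith [hmono]


lemma aux_gauss : ∀ K : ℕ, (∑ k ∈ Finset.range K, (k:ℝ)) = K*(K-1)/2 := by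
  intro K
  induction K with
  | zero => simp
  | succ n ih =>
    rw [Finset.sum_range_succ, ih]
    push_cast
    ring

lemma aux_main (Λ D : ℝ → ℝ) (αl αu Q : ℝ) (hαl : 0 < αl) (hαu : αl ≤ αu) (hQ : 0 ≤ Q)
    (hchord : ∀ θ θ' : ℝ, (θ' - θ) * D θ ≤ Λ θ' - Λ θ)
    (hlow : ∀ θ ∈ Icc (0:ℝ) 1, ∀ θ' ∈ Icc (0:ℝ) 1,
      αl * ((θ' - θ) ^ 2 * Q) ≤ (θ' - θ) * (D θ' - D θ))
    (hup : ∀ θ ∈ Icc (0:ℝ) 1, ∀ θ' ∈ Icc (0:ℝ) 1,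
      (θ' - θ) * (D θ' - D θ) ≤ αu * ((θ' - θ) ^ 2 * Q))
    (hmin : ∀ θ ∈ Icc (0:ℝ) 1, Λ 0 ≤ Λ θ) :
    αl * Q / 2 ≤ Λ 1 - Λ 0 := by
  have hαu0 : 0 < αu := lt_of_lt_of_le hαl hαu
  have h01 : (0:ℝ) ∈ Icc (0:ℝ) 1 := ⟨le_rfl, zero_le_one⟩
  have h11 : (1:ℝ) ∈ Icc (0:ℝ) 1 := ⟨zero_le_one, le_rfl⟩
  -- positive D on (0,1]
  have hDpos : ∀ θ : ℝ, θ ∈ Icc (0:ℝ) 1 → 0 < θ → 0 ≤ D θ := by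
    intro θ hθ hθpos
    have h1 : Λ 0 ≤ Λ θ := hmin θ hθ
    have h2 := hchord θ 0
    nlinarith
  -- D 0 ≥ 0
  have hD0 : 0 ≤ D 0 := by
    by_contra hneg
    push_neg at hneg
    have hQpos : 0 < Q := by
      rcases lt_or_eq_of_le hQ with h | h
      · exact h
      · exfalso
        have h1 : 0 ≤ D 1 := hDpos 1 h11 one_pos
        have h2 := hup 0 h01 1 h11
        nlinarith
    set θ0 := min 1 (-(D 0) / (2*αu*Q)) with hθ0
    have hθ0pos : 0 < θ0 := lt_min one_pos (div_pos (by linarith) (by positivity))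
    have hθ0le : θ0 ≤ 1 := min_le_left _ _
    have h1 : 0 ≤ D θ0 := hDpos θ0 ⟨hθ0pos.le, hθ0le⟩ hθ0pos
    have h2 := hup 0 h01 θ0 ⟨hθ0pos.le, hθ0le⟩
    have hb : θ0 ≤ -(D 0)/(2*αu*Q) := min_le_right _ _
    have hb' : θ0 * (2*αu*Q) ≤ -(D 0) := (le_div_iff₀ (by positivity)).1 hb
    nlinarith [mul_pos hθ0pos hθ0pos]
  -- grid bound
  have hgrid : ∀ K : ℕ, 1 ≤ K → αl * Q * (((K:ℝ) - 1)/(2*K)) ≤ Λ 1 - Λ 0 := by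
    intro K hK
    have hKpos : (0:ℝ) < (K:ℝ) := by exact_mod_cast hK
    have tele : Λ 1 - Λ 0 = ∑ k ∈ Finset.range K, (Λ (((k:ℝ)+1)/K) - Λ ((k:ℝ)/K)) := by
      have h := Finset.sum_range_sub (fun k : ℕ => Λ ((k:ℝ)/(K:ℝ))) K
      simp only [Nat.cast_zero, zero_div, Nat.cast_add, Nat.cast_one] at h
      rw [div_self hKpos.ne'] at h
      exact h.symm
    have hmem : ∀ k : ℕ, k ≤ K → ((k:ℝ)/K) ∈ Icc (0:ℝ) 1 := by
      intro k hk
      constructor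
      · positivity
      · rw [div_le_one hKpos]; exact_mod_cast hk
    have step : ∀ k ∈ Finset.range K,
        (1/(K:ℝ)) * (D 0 + αl * ((k:ℝ)/K) * Q) ≤ Λ (((k:ℝ)+1)/K) - Λ ((k:ℝ)/K) := by
      intro k hk
      have hkK := hmem k (Nat.le_of_lt (Finset.mem_range.1 hk))
      have hk1K : (((k:ℝ)+1)/K) ∈ Icc (0:ℝ) 1 := by
        have : ((k:ℝ)+1) = ((k+1 : ℕ):ℝ) := by push_cast; ring
        rw [this]
        exact hmem (k+1) (Finset.mem_range.1 hk)
      have hch := hchord ((k:ℝ)/K) (((k:ℝ)+1)/K)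
      have hdiff : ((k:ℝ)+1)/K - (k:ℝ)/K = 1/K := by ring
      rw [hdiff] at hch
      have hDk : D 0 + αl * ((k:ℝ)/K) * Q ≤ D ((k:ℝ)/K) := by
        have hlow' := hlow 0 h01 ((k:ℝ)/K) hkK
        rcases Nat.eq_zero_or_pos k with rfl | hkpos
        · simp
        · have hkr : 0 < (k:ℝ)/K := by
            have : (0:ℝ) < (k:ℝ) := by exact_mod_cast hkpos
            positivity
          nlinarith
      calc (1/(K:ℝ)) * (D 0 + αl * ((k:ℝ)/K) * Q)
          ≤ (1/(K:ℝ)) * D ((k:ℝ)/K) :=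
            mul_le_mul_of_nonneg_left hDk (by positivity)
        _ ≤ Λ (((k:ℝ)+1)/K) - Λ ((k:ℝ)/K) := hch
    have total := Finset.sum_le_sum step
    have hsumval : ∑ k ∈ Finset.range K, (1/(K:ℝ)) * (D 0 + αl * ((k:ℝ)/K) * Q)
        = D 0 + αl * Q * (((K:ℝ) - 1)/(2*K)) := by
      simp only [mul_add]
      rw [Finset.sum_add_distrib, Finset.sum_const, Finset.card_range]
      have e1 : ∑ k ∈ Finset.range K, (1/(K:ℝ)) * (αl * ((k:ℝ)/K) * Q)
          = (αl * Q / (K:ℝ)^2) * ∑ k ∈ Finset.range K, (k:ℝ) := by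
        rw [Finset.mul_sum]
        refine Finset.sum_congr rfl fun k _ => ?_
        field_simp
      rw [e1, aux_gauss, nsmul_eq_mul]
      field_simp
    rw [← tele] at total
    rw [hsumval] at total
    linarith
  -- take K large
  by_contra hcon
  push_neg at hcon
  set R := Λ 1 - Λ 0 with hR
  set gap := αl * Q / 2 - R with hgap
  have hgappos : 0 < gap := by simp [hgap]; linarith
  obtain ⟨K, hKgt⟩ := exists_nat_gt (αl * Q / (2 * gap))
  have hK1 : 1 ≤ K + 1 := by omega
  have hKpos : (0:ℝ) < ((K+1:ℕ):ℝ) := by positivity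
  have hgr := hgrid (K+1) hK1
  have hmul := mul_le_mul_of_nonneg_right hgr (by positivity : (0:ℝ) ≤ 2 * ((K+1:ℕ):ℝ))
  have hsimp : αl * Q * ((((K+1:ℕ):ℝ) - 1)/(2*((K+1:ℕ):ℝ))) * (2 * ((K+1:ℕ):ℝ))
      = αl * Q * (((K+1:ℕ):ℝ) - 1) := by
    field_simp
  rw [hsimp] at hmul
  -- hmul : αl*Q*((K+1)-1) ≤ R * (2*(K+1))
  have hKgt' : αl * Q < ((K:ℝ)+1) * (2 * gap) := by
    have h1 : αl * Q / (2*gap) < (K:ℝ) := hKgt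
    have h2 : αl * Q / (2*gap) < (K:ℝ) + 1 := by linarith
    rw [div_lt_iff₀ (by positivity)] at h2
    linarith [h2]
  have hexp : ((K:ℝ)+1) * (2*gap) = ((K:ℝ)+1)*(αl*Q) - 2*((K:ℝ)+1)*R := by
    rw [hgap]; ring
  push_cast at hmul
  nlinarith [hmul, hKgt', hexp]

/-- **Lemma (second-order growth of the limiting dual function).**
Under Assumptions 2 and 3, for any `c ≥ 0`, a minimizer `μ* ∈ Ω` of the limiting
dual function `L^Fld_{c,t+1}` satisfies, for every `μ ∈ Ω`,
`L^Fld(μ) − L^Fld(μ*) ≥ (α̲·β̲/2)·‖P_S(μ − μ*)‖₂²`, where `S = span{a₁,…,aₙ}`,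
`P_S` is the orthogonal projection onto `S`, and `β̲` is the smallest positive
eigenvalue of `E_ã[ã ãᵀ]`. -/
theorem stmt8 (m n : ℕ) (hn : 0 < n)
    (a : Fin n → EuclideanSpace ℝ (Fin m)) (ha : ∀ j i, 0 ≤ a j i)
    (p : Fin n → ℝ) (hp : ∀ j, 0 < p j) (hpsum : ∑ j, p j = 1)
    -- Assumption 2: the type-j reward has density `f j` on `[0, u j]`
    -- with `α ≤ f j ≤ β` there
    (ν : Fin n → Measure ℝ) (hprob : ∀ j, IsProbabilityMeasure (ν j))
    (u : Fin n → ℝ) (f : Fin n → ℝ → ℝ) (α β : ℝ) (hα : 0 < α) (hαβ : α ≤ β)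
    (hν : ∀ j, ν j = volume.withDensity fun r => ENNReal.ofReal (f j r))
    (hsupp : ∀ j r, r ∉ Icc (0:ℝ) (u j) → f j r = 0)
    (hf : ∀ j, ∀ r ∈ Icc (0:ℝ) (u j), α ≤ f j r ∧ f j r ≤ β)
    -- Assumption 3: compact convex Ω ⊆ ℝ^m_{≥0} and the two-sided CDF condition
    (Ωset : Set (EuclideanSpace ℝ (Fin m)))
    (hΩcomp : IsCompact Ωset) (hΩconv : Convex ℝ Ωset)
    (hΩpos : ∀ μ ∈ Ωset, ∀ i, 0 ≤ μ i)
    (αl αu : ℝ) (hαl : 0 < αl) (hαu : αl ≤ αu)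
    (hcond : ∀ μ' ∈ Ωset, ∀ μ'' ∈ Ωset,
      αl * ∑ j, p j * ⟪a j, μ' - μ''⟫ ^ 2 ≤
        (∑ j, p j * (((ν j (Iic ⟪a j, μ'⟫)).toReal
          - (ν j (Iic ⟪a j, μ''⟫)).toReal) * ⟪a j, μ' - μ''⟫)) ∧
      (∑ j, p j * (((ν j (Iic ⟪a j, μ'⟫)).toReal
          - (ν j (Iic ⟪a j, μ''⟫)).toReal) * ⟪a j, μ' - μ''⟫)) ≤
        αu * ∑ j, p j * ⟪a j, μ' - μ''⟫ ^ 2)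
    -- the smallest positive eigenvalue β̲ of E_ã[ã ãᵀ] = ∑_j p_j a_j a_jᵀ
    (M : Matrix (Fin m) (Fin m) ℝ) (hM : ∀ i i', M i i' = ∑ j, p j * a j i * a j i')
    (βl : ℝ)
    (hβl : IsLeast {e : ℝ | 0 < e ∧ ∃ v : Fin m → ℝ, v ≠ 0 ∧ M.mulVec v = e • v} βl)
    -- the subspace spanned by the possible query sizes
    (S : Submodule ℝ (EuclideanSpace ℝ (Fin m))) (hS : S = Submodule.span ℝ (range a))
    -- the limiting dual function at capacity `c ≥ 0`, horizon `s − 1 = N ≥ 1`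
    (N : ℕ) (hN : 0 < N)
    (c : EuclideanSpace ℝ (Fin m)) (hc : ∀ i, 0 ≤ c i)
    (LFld : EuclideanSpace ℝ (Fin m) → ℝ)
    (hLFld : ∀ μ, LFld μ =
      ⟪c, μ⟫ / N + ∑ j, p j * ∫ r, max (r - ⟪a j, μ⟫) 0 ∂ν j)
    (μstar : EuclideanSpace ℝ (Fin m))
    (hμstar : μstar ∈ Ωset ∧ ∀ μ ∈ Ωset, LFld μstar ≤ LFld μ) :
    ∀ μ ∈ Ωset,
      αl * βl / 2 *
        ‖(S.orthogonalProjectionOnto (μ - μstar) : EuclideanSpace ℝ (Fin m))‖ ^ 2 ≤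
      LFld μ - LFld μstar := by
  classical
  intro μ hμ
  -- a.e. support of the reward distributions
  have hae : ∀ j, ∀ᵐ r ∂ν j, r ∈ Icc (0:ℝ) (u j) := by
    intro j
    rw [ae_iff]
    have hset : {r : ℝ | ¬ r ∈ Icc (0:ℝ) (u j)} = (Icc (0:ℝ) (u j))ᶜ := rfl
    rw [hset, hν j, withDensity_apply _ measurableSet_Icc.compl]
    rw [setLIntegral_congr_fun measurableSet_Icc.compl
      (fun r hr => by rw [hsupp j r hr, ENNReal.ofReal_zero])]
    exact lintegral_zero
  have hint : ∀ j (t : ℝ), Integrable (fun r => max (r - t) 0) (ν j) := by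
    intro j t
    haveI := hprob j
    exact aux_int (ν j) (hae j) t
  set d : EuclideanSpace ℝ (Fin m) := μ - μstar with hd
  have hip : ∀ j (θ : ℝ), ⟪a j, μstar + θ • d⟫ = ⟪a j, μstar⟫ + θ * ⟪a j, d⟫ :=
    fun j θ => by rw [inner_add_right, real_inner_smul_right]
  have hcip : ∀ θ : ℝ, ⟪c, μstar + θ • d⟫ = ⟪c, μstar⟫ + θ * ⟪c, d⟫ :=
    fun θ => by rw [inner_add_right, real_inner_smul_right]
  have hmem : ∀ θ ∈ Icc (0:ℝ) 1, μstar + θ • d ∈ Ωset := by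
    intro θ hθ
    have h := hΩconv hμstar.1 hμ (by linarith [hθ.2] : (0:ℝ) ≤ 1 - θ) hθ.1 (by ring)
    have e : (1 - θ) • μstar + θ • μ = μstar + θ • d := by
      rw [hd, smul_sub, sub_smul, one_smul]; abel
    rwa [e] at h
  have hsub : ∀ θ θ' : ℝ, (μstar + θ' • d) - (μstar + θ • d) = (θ' - θ) • d := by
    intro θ θ'
    rw [sub_smul]; abel
  have hQnn : (0:ℝ) ≤ ∑ j, p j * ⟪a j, d⟫ ^ 2 :=
    Finset.sum_nonneg fun j _ => mul_nonneg (hp j).le (sq_nonneg _)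
  -- the chord inequality
  have hchord : ∀ θ θ' : ℝ,
      (θ' - θ) * (⟪c, d⟫/(N:ℝ) + ∑ j, p j *
        (((ν j (Iic (⟪a j, μstar⟫ + θ * ⟪a j, d⟫))).toReal - 1) * ⟪a j, d⟫)) ≤
      LFld (μstar + θ' • d) - LFld (μstar + θ • d) := by
    intro θ θ'
    rw [hLFld (μstar + θ' • d), hLFld (μstar + θ • d)]
    simp only [hip, hcip]
    have hsum : ∑ j, p j * (((ν j (Iic (⟪a j, μstar⟫ + θ * ⟪a j, d⟫))).toReal - 1)
          * ((θ' - θ) * ⟪a j, d⟫)) ≤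
        ∑ j, p j * ((∫ r, max (r - (⟪a j, μstar⟫ + θ' * ⟪a j, d⟫)) 0 ∂ν j)
          - ∫ r, max (r - (⟪a j, μstar⟫ + θ * ⟪a j, d⟫)) 0 ∂ν j) := by
      refine Finset.sum_le_sum fun j _ => ?_
      haveI := hprob j
      have h := aux_sub (ν j) (hint j) (⟪a j, μstar⟫ + θ * ⟪a j, d⟫)
        (⟪a j, μstar⟫ + θ' * ⟪a j, d⟫)
      have e : ⟪a j, μstar⟫ + θ' * ⟪a j, d⟫ - (⟪a j, μstar⟫ + θ * ⟪a j, d⟫)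
          = (θ' - θ) * ⟪a j, d⟫ := by ring
      rw [e] at h
      exact mul_le_mul_of_nonneg_left h (hp j).le
    have e3 : ∑ j, p j * ((∫ r, max (r - (⟪a j, μstar⟫ + θ' * ⟪a j, d⟫)) 0 ∂ν j)
          - ∫ r, max (r - (⟪a j, μstar⟫ + θ * ⟪a j, d⟫)) 0 ∂ν j)
        = (∑ j, p j * ∫ r, max (r - (⟪a j, μstar⟫ + θ' * ⟪a j, d⟫)) 0 ∂ν j)
          - ∑ j, p j * ∫ r, max (r - (⟪a j, μstar⟫ + θ * ⟪a j, d⟫)) 0 ∂ν j := by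
      rw [← Finset.sum_sub_distrib]
      exact Finset.sum_congr rfl fun j _ => by ring
    have e4 : (θ' - θ) * (⟪c, d⟫/(N:ℝ) + ∑ j, p j *
          (((ν j (Iic (⟪a j, μstar⟫ + θ * ⟪a j, d⟫))).toReal - 1) * ⟪a j, d⟫))
        = (θ' - θ) * ⟪c, d⟫/(N:ℝ) + ∑ j, p j *
          (((ν j (Iic (⟪a j, μstar⟫ + θ * ⟪a j, d⟫))).toReal - 1)
            * ((θ' - θ) * ⟪a j, d⟫)) := by
      rw [mul_add, Finset.mul_sum, mul_div_assoc]
      congr 1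
      exact Finset.sum_congr rfl fun j _ => by ring
    rw [e4]
    rw [e3] at hsum
    exact le_trans (add_le_add_right hsum _) (le_of_eq (by ring))
  -- monotonicity of D from Assumption 3
  have hDdiff : ∀ θ θ' : ℝ,
      (θ' - θ) * ((⟪c, d⟫/(N:ℝ) + ∑ j, p j *
          (((ν j (Iic (⟪a j, μstar⟫ + θ' * ⟪a j, d⟫))).toReal - 1) * ⟪a j, d⟫))
        - (⟪c, d⟫/(N:ℝ) + ∑ j, p j *
          (((ν j (Iic (⟪a j, μstar⟫ + θ * ⟪a j, d⟫))).toReal - 1) * ⟪a j, d⟫)))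
      = ∑ j, p j * (((ν j (Iic (⟪a j, μstar⟫ + θ' * ⟪a j, d⟫))).toReal
          - (ν j (Iic (⟪a j, μstar⟫ + θ * ⟪a j, d⟫))).toReal) * ((θ' - θ) * ⟪a j, d⟫)) := by
    intro θ θ'
    rw [add_sub_add_left_eq_sub, ← Finset.sum_sub_distrib, Finset.mul_sum]
    exact Finset.sum_congr rfl fun j _ => by ring
  have hQeq : ∀ θ θ' : ℝ,
      ∑ j, p j * ((θ' - θ) * ⟪a j, d⟫) ^ 2
        = (θ' - θ) ^ 2 * ∑ j, p j * ⟪a j, d⟫ ^ 2 := by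
    intro θ θ'
    rw [Finset.mul_sum]
    exact Finset.sum_congr rfl fun j _ => by ring
  have hboth : ∀ θ ∈ Icc (0:ℝ) 1, ∀ θ' ∈ Icc (0:ℝ) 1,
      αl * ∑ j, p j * ((θ' - θ) * ⟪a j, d⟫) ^ 2 ≤
        (∑ j, p j * (((ν j (Iic (⟪a j, μstar⟫ + θ' * ⟪a j, d⟫))).toReal
          - (ν j (Iic (⟪a j, μstar⟫ + θ * ⟪a j, d⟫))).toReal) * ((θ' - θ) * ⟪a j, d⟫))) ∧
      (∑ j, p j * (((ν j (Iic (⟪a j, μstar⟫ + θ' * ⟪a j, d⟫))).toReal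
          - (ν j (Iic (⟪a j, μstar⟫ + θ * ⟪a j, d⟫))).toReal) * ((θ' - θ) * ⟪a j, d⟫))) ≤
        αu * ∑ j, p j * ((θ' - θ) * ⟪a j, d⟫) ^ 2 := by
    intro θ hθ θ' hθ'
    have h := hcond (μstar + θ' • d) (hmem θ' hθ') (μstar + θ • d) (hmem θ hθ)
    rw [hsub θ θ'] at h
    simp only [hip, real_inner_smul_right] at h
    exact h
  -- apply the abstract segment lemma
  have key := aux_main (fun θ => LFld (μstar + θ • d))
      (fun θ => ⟪c, d⟫/(N:ℝ) + ∑ j, p j *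
        (((ν j (Iic (⟪a j, μstar⟫ + θ * ⟪a j, d⟫))).toReal - 1) * ⟪a j, d⟫))
      αl αu (∑ j, p j * ⟪a j, d⟫ ^ 2) hαl hαu hQnn
      (fun θ θ' => hchord θ θ')
      (fun θ hθ θ' hθ' => by
        have h := (hboth θ hθ θ' hθ').1
        rw [hQeq θ θ'] at h
        calc αl * ((θ' - θ) ^ 2 * ∑ j, p j * ⟪a j, d⟫ ^ 2) ≤ _ := h
          _ = _ := (hDdiff θ θ').symm)
      (fun θ hθ θ' hθ' => by
        have h := (hboth θ hθ θ' hθ').2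
        rw [hQeq θ θ'] at h
        calc (θ' - θ) * _ = _ := hDdiff θ θ'
          _ ≤ αu * ((θ' - θ) ^ 2 * ∑ j, p j * ⟪a j, d⟫ ^ 2) := h)
      (fun θ hθ => by
        show LFld (μstar + (0:ℝ) • d) ≤ LFld (μstar + θ • d)
        rw [zero_smul, add_zero]
        exact hμstar.2 _ (hmem θ hθ))
  have e1 : μstar + (1:ℝ) • d = μ := by rw [one_smul, hd]; abel
  have e0 : μstar + (0:ℝ) • d = μstar := by rw [zero_smul, add_zero]
  have key' : αl * (∑ j, p j * ⟪a j, d⟫ ^ 2) / 2 ≤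
      LFld (μstar + (1:ℝ) • d) - LFld (μstar + (0:ℝ) • d) := key
  rw [e1, e0] at key'
  -- the quadratic-form bound
  have hquad := aux_quad a p hp M hM βl (fun e he hv => hβl.2 ⟨he, hv⟩) S hS d
  have hmul := mul_le_mul_of_nonneg_left hquad (by positivity : (0:ℝ) ≤ αl / 2)
  calc αl * βl / 2 * ‖(S.orthogonalProjectionOnto d : EuclideanSpace ℝ (Fin m))‖ ^ 2
      = αl / 2 * (βl * ‖(S.orthogonalProjectionOnto d : EuclideanSpace ℝ (Fin m))‖ ^ 2) := by ring
    _ ≤ αl / 2 * ∑ j, p j * ⟪a j, d⟫ ^ 2 := hmul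
    _ = αl * (∑ j, p j * ⟪a j, d⟫ ^ 2) / 2 := by ring
    _ ≤ LFld μ - LFld μstar := key'
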